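/- Let X be a board, T ⊂ X, and S(T;U) = Σ_{D ∈ D(U): Cl_D(T) = U} i^{h(D)}, where Cl_D(T) is the minimal closed-for-D subset containing T. Then S(X) = Σ_{U: T ⊆ U ⊆ Cl(T)} S(X\U) · S(T;U), where Cl(T) = ⋃_{D ∈ D(X)} Cl_D(T). -/

import Mathlib

open Finset

attribute [local instance] Classical.propDecidable

/-- A domino `{(i,j),(i+1,j)}` is horizontal. -/
def Horiz (d : Finset (ℤ × ℤ)) : Prop := ∃ i j : ℤ, d = {(i, j), (i + 1, j)}

/-- A domino `{(i,j),(i,j+1)}` is vertical. -/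
def Vert (d : Finset (ℤ × ℤ)) : Prop := ∃ i j : ℤ, d = {(i, j), (i, j + 1)}

/-- `D` is a domino tiling of the board `X`. -/
def IsTiling (X : Finset (ℤ × ℤ)) (D : Finset (Finset (ℤ × ℤ))) : Prop :=
  (∀ d ∈ D, Horiz d ∨ Vert d) ∧ (∀ d ∈ D, d ⊆ X) ∧ ∀ p ∈ X, ∃! d, d ∈ D ∧ p ∈ d

/-- The finite set of all domino tilings of a board `X`. -/
noncomputable def tilings (X : Finset (ℤ × ℤ)) : Finset (Finset (Finset (ℤ × ℤ))) :=
  X.powerset.powerset.filter (IsTiling X)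

/-- The number of horizontal dominoes in a tiling. -/
noncomputable def hcount (D : Finset (Finset (ℤ × ℤ))) : ℕ := (D.filter Horiz).card

/-- `S(X) = ∑_{D ∈ D(X)} i^{h(D)}`. -/
noncomputable def Scomp (X : Finset (ℤ × ℤ)) : ℂ :=
  ∑ D ∈ tilings X, Complex.I ^ hcount D

/-- The rectangle `[1,a] × [1,b]` in `ℤ × ℤ`. -/
noncomputable def rect (a b : ℤ) : Finset (ℤ × ℤ) := Finset.Icc 1 a ×ˢ Finset.Icc 1 b

/-- `U` is closed for the tiling `D`: no domino of `D` meets both `U` and its complement. -/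
def ClosedFor (D : Finset (Finset (ℤ × ℤ))) (U : Finset (ℤ × ℤ)) : Prop :=
  ∀ d ∈ D, (∃ p ∈ d, p ∈ U) → ∀ p ∈ d, p ∈ U

/-- `Cl_D(T)`: the minimal subset of `X` containing `T` that is closed for `D`. -/
noncomputable def ClD (X : Finset (ℤ × ℤ)) (D : Finset (Finset (ℤ × ℤ)))
    (T : Finset (ℤ × ℤ)) : Finset (ℤ × ℤ) :=
  X.filter (fun p => ∀ U : Finset (ℤ × ℤ), U ⊆ X → T ⊆ U → ClosedFor D U → p ∈ U)

/-- `Cl(T)`: the union of `Cl_D(T)` over all tilings `D` of `X`. -/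
noncomputable def Cl (X T : Finset (ℤ × ℤ)) : Finset (ℤ × ℤ) :=
  (tilings X).biUnion (fun D => ClD X D T)

/-- `S(T;U) = ∑_{D ∈ D(U), Cl_D(T) = U} i^{h(D)}`. -/
noncomputable def SclT (T U : Finset (ℤ × ℤ)) : ℂ :=
  ∑ D ∈ (tilings U).filter (fun D => ClD U D T = U), Complex.I ^ hcount D

-- auxiliary lemmas

lemma mem_tilings {X : Finset (ℤ × ℤ)} {D : Finset (Finset (ℤ × ℤ))} :
    D ∈ tilings X ↔ IsTiling X D := by
  simp only [tilings, mem_filter, mem_powerset, and_iff_right_iff_imp]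
  intro h d hd
  exact Finset.mem_powerset.2 (h.2.1 d hd)

lemma domino_nonempty {d : Finset (ℤ × ℤ)} (h : Horiz d ∨ Vert d) : d.Nonempty := by
  rcases h with ⟨i, j, rfl⟩ | ⟨i, j, rfl⟩ <;> exact ⟨(i, j), by simp⟩

lemma ClD_subset (X D T) : ClD X D T ⊆ X := filter_subset _ _

lemma subset_ClD {X T : Finset (ℤ × ℤ)} (D) (hT : T ⊆ X) : T ⊆ ClD X D T := by
  intro p hp
  exact mem_filter.2 ⟨hT hp, fun U _ hTU _ => hTU hp⟩

lemma ClD_min {X T U : Finset (ℤ × ℤ)} {D} (hUX : U ⊆ X) (hTU : T ⊆ U)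
    (hcl : ClosedFor D U) : ClD X D T ⊆ U := by
  intro p hp
  exact (mem_filter.1 hp).2 U hUX hTU hcl

lemma closedFor_ClD {X T : Finset (ℤ × ℤ)} {D} (hD : ∀ d ∈ D, d ⊆ X) :
    ClosedFor D (ClD X D T) := by
  intro d hd ⟨p, hpd, hp⟩ q hqd
  refine mem_filter.2 ⟨hD d hd hqd, fun U hUX hTU hcl => ?_⟩
  exact hcl d hd ⟨p, hpd, (mem_filter.1 hp).2 U hUX hTU hcl⟩ q hqd

lemma closedFor_inter {D} {U V : Finset (ℤ × ℤ)} (hU : ClosedFor D U) (hV : ClosedFor D V) :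
    ClosedFor D (U ∩ V) := by
  intro d hd ⟨p, hpd, hp⟩ q hqd
  rcases mem_inter.1 hp with ⟨h1, h2⟩
  exact mem_inter.2 ⟨hU d hd ⟨p, hpd, h1⟩ q hqd, hV d hd ⟨p, hpd, h2⟩ q hqd⟩

/-- Transfer lemma: closure computed inside a closed set. -/
lemma ClD_transfer {X T U : Finset (ℤ × ℤ)} {D} (hUX : U ⊆ X) (hTU : T ⊆ U)
    (hcl : ClosedFor D U) :
    ClD X D T = ClD U (D.filter (fun d => d ⊆ U)) T := by
  ext p
  simp only [ClD, mem_filter]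
  constructor
  · rintro ⟨hpX, hp⟩
    refine ⟨hp U hUX hTU hcl, fun V hVU hTV hclV => ?_⟩
    refine hp V (hVU.trans hUX) hTV ?_
    intro d hd ⟨q, hqd, hq⟩ r hrd
    have hdU : d ⊆ U := hcl d hd ⟨q, hqd, hVU hq⟩
    exact hclV d (mem_filter.2 ⟨hd, hdU⟩) ⟨q, hqd, hq⟩ r hrd
  · rintro ⟨hpU, hp⟩
    refine ⟨hUX hpU, fun V hVX hTV hclV => ?_⟩
    have : p ∈ V ∩ U := by
      refine hp (V ∩ U) inter_subset_right (fun t ht => mem_inter.2 ⟨hTV ht, hTU ht⟩) ?_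
      intro d hd hex r hrd
      exact closedFor_inter hclV hcl d (mem_filter.1 hd).1 hex r hrd
    exact (mem_inter.1 this).1

lemma isTiling_filter_sub {X U : Finset (ℤ × ℤ)} {D} (hD : IsTiling X D) (hUX : U ⊆ X)
    (hcl : ClosedFor D U) : IsTiling U (D.filter (fun d => d ⊆ U)) := by
  refine ⟨fun d hd => hD.1 d (mem_filter.1 hd).1, fun d hd => (mem_filter.1 hd).2, ?_⟩
  intro p hp
  obtain ⟨d, ⟨hd, hpd⟩, huniq⟩ := hD.2.2 p (hUX hp)
  have hdU : d ⊆ U := fun q hq => hcl d hd ⟨p, hpd, hp⟩ q hq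
  refine ⟨d, ⟨mem_filter.2 ⟨hd, hdU⟩, hpd⟩, ?_⟩
  rintro d' ⟨hd', hpd'⟩
  exact huniq d' ⟨(mem_filter.1 hd').1, hpd'⟩

lemma isTiling_filter_not {X U : Finset (ℤ × ℤ)} {D} (hD : IsTiling X D)
    (hcl : ClosedFor D U) : IsTiling (X \ U) (D.filter (fun d => ¬ d ⊆ U)) := by
  refine ⟨fun d hd => hD.1 d (mem_filter.1 hd).1, ?_, ?_⟩
  · intro d hd
    obtain ⟨hd, hnd⟩ := mem_filter.1 hd
    intro q hq
    refine mem_sdiff.2 ⟨hD.2.1 d hd hq, fun hqU => ?_⟩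
    exact hnd (fun r hr => hcl d hd ⟨q, hq, hqU⟩ r hr)
  · intro p hp
    obtain ⟨hpX, hpU⟩ := mem_sdiff.1 hp
    obtain ⟨d, ⟨hd, hpd⟩, huniq⟩ := hD.2.2 p hpX
    have hnd : ¬ d ⊆ U := fun h => hpU (h hpd)
    refine ⟨d, ⟨mem_filter.2 ⟨hd, hnd⟩, hpd⟩, ?_⟩
    rintro d' ⟨hd', hpd'⟩
    exact huniq d' ⟨(mem_filter.1 hd').1, hpd'⟩

lemma isTiling_union {X U : Finset (ℤ × ℤ)} {D1 D2 : Finset (Finset (ℤ × ℤ))}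
    (hU : U ⊆ X) (h1 : IsTiling (X \ U) D1) (h2 : IsTiling U D2) :
    IsTiling X (D1 ∪ D2) := by
  refine ⟨?_, ?_, ?_⟩
  · intro d hd
    rcases Finset.mem_union.1 hd with h | h
    exacts [h1.1 d h, h2.1 d h]
  · intro d hd
    rcases Finset.mem_union.1 hd with h | h
    · exact (h1.2.1 d h).trans (sdiff_subset)
    · exact (h2.2.1 d h).trans hU
  · intro p hp
    by_cases hpU : p ∈ U
    · obtain ⟨d, ⟨hd, hpd⟩, huniq⟩ := h2.2.2 p hpU
      refine ⟨d, ⟨Finset.mem_union_right _ hd, hpd⟩, ?_⟩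
      rintro d' ⟨hd', hpd'⟩
      rcases Finset.mem_union.1 hd' with h | h
      · exact absurd hpU (mem_sdiff.1 (h1.2.1 d' h hpd')).2
      · exact huniq d' ⟨h, hpd'⟩
    · obtain ⟨d, ⟨hd, hpd⟩, huniq⟩ := h1.2.2 p (Finset.mem_sdiff.2 ⟨hp, hpU⟩)
      refine ⟨d, ⟨Finset.mem_union_left _ hd, hpd⟩, ?_⟩
      rintro d' ⟨hd', hpd'⟩
      rcases Finset.mem_union.1 hd' with h | h
      · exact huniq d' ⟨h, hpd'⟩
      · exact absurd (h2.2.1 d' h hpd') hpU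

lemma closedFor_of_parts {X U : Finset (ℤ × ℤ)} {D1 D2 : Finset (Finset (ℤ × ℤ))}
    (h1 : ∀ d ∈ D1, d ⊆ X \ U) (h2 : ∀ d ∈ D2, d ⊆ U) : ClosedFor (D1 ∪ D2) U := by
  intro d hd ⟨p, hpd, hp⟩ q hqd
  rcases Finset.mem_union.1 hd with h | h
  · exact absurd hp (mem_sdiff.1 (h1 d h hpd)).2
  · exact h2 d h hqd

lemma Cl_subset (X T : Finset (ℤ × ℤ)) : Cl X T ⊆ X := by
  intro p hp
  obtain ⟨D, _, hpD⟩ := Finset.mem_biUnion.1 hp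
  exact (filter_subset _ _) hpD
lemma hcount_union {D1 D2 : Finset (Finset (ℤ × ℤ))} (h : Disjoint D1 D2) :
    hcount (D1 ∪ D2) = hcount D1 + hcount D2 := by
  unfold hcount
  rw [filter_union, card_union_of_disjoint (disjoint_filter_filter h)]

theorem stmt14 (X T : Finset (ℤ × ℤ)) (hT : T ⊆ X) :
    Scomp X =
      ∑ U ∈ (Cl X T).powerset.filter (fun U => T ⊆ U),
        Scomp (X \ U) * SclT T U := by
  classical
  have hmap : ∀ D ∈ tilings X, ClD X D T ∈ (Cl X T).powerset.filter (fun U => T ⊆ U) := by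
    intro D hD
    refine mem_filter.2 ⟨mem_powerset.2 ?_, subset_ClD D hT⟩
    intro p hp
    exact Finset.mem_biUnion.2 ⟨D, hD, hp⟩
  rw [Scomp, ← Finset.sum_fiberwise_of_maps_to hmap]
  refine Finset.sum_congr rfl fun U hU => ?_
  obtain ⟨hUCl, hTU⟩ := mem_filter.1 hU
  have hUX : U ⊆ X := (mem_powerset.1 hUCl).trans (Cl_subset X T)
  rw [Scomp, SclT, Finset.sum_mul_sum, ← Finset.sum_product']
  refine Finset.sum_nbij'
    (i := fun D => (D.filter (fun d => ¬ d ⊆ U), D.filter (fun d => d ⊆ U)))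
    (j := fun p => p.1 ∪ p.2) ?_ ?_ ?_ ?_ ?_
  · intro D hD
    obtain ⟨hDt, hClDU⟩ := mem_filter.1 hD
    have hDtil := mem_tilings.1 hDt
    have hcl : ClosedFor D U := hClDU ▸ closedFor_ClD hDtil.2.1
    refine Finset.mem_product.2 ⟨mem_tilings.2 (isTiling_filter_not hDtil hcl), ?_⟩
    refine mem_filter.2 ⟨mem_tilings.2 (isTiling_filter_sub hDtil hUX hcl), ?_⟩
    rw [← ClD_transfer hUX hTU hcl, hClDU]
  · rintro ⟨D1, D2⟩ hp
    obtain ⟨h1, h2'⟩ := Finset.mem_product.1 hp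
    obtain ⟨h2, hClU⟩ := mem_filter.1 h2'
    have h1t := mem_tilings.1 h1
    have h2t := mem_tilings.1 h2
    have hcl : ClosedFor (D1 ∪ D2) U := closedFor_of_parts h1t.2.1 h2t.2.1
    refine mem_filter.2 ⟨mem_tilings.2 (isTiling_union hUX h1t h2t), ?_⟩
    have hfilt : (D1 ∪ D2).filter (fun d => d ⊆ U) = D2 := by
      ext d
      simp only [mem_filter, Finset.mem_union]
      constructor
      · rintro ⟨h | h, hdU⟩
        · exfalso
          obtain ⟨q, hq⟩ := domino_nonempty (h1t.1 d h)
          exact (mem_sdiff.1 (h1t.2.1 d h hq)).2 (hdU hq)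
        · exact h
      · exact fun h => ⟨Or.inr h, h2t.2.1 d h⟩
    rw [ClD_transfer hUX hTU hcl, hfilt, hClU]
  · intro D hD
    simp only
    rw [Finset.union_comm, Finset.filter_union_filter_not_eq]
  · rintro ⟨D1, D2⟩ hp
    obtain ⟨h1, h2'⟩ := Finset.mem_product.1 hp
    obtain ⟨h2, _⟩ := mem_filter.1 h2'
    have h1t := mem_tilings.1 h1
    have h2t := mem_tilings.1 h2
    have key : ∀ d ∈ D1 ∪ D2, (d ⊆ U ↔ d ∈ D2) := by
      intro d hd
      rcases Finset.mem_union.1 hd with h | h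
      · constructor
        · intro hdU
          exfalso
          obtain ⟨q, hq⟩ := domino_nonempty (h1t.1 d h)
          exact (mem_sdiff.1 (h1t.2.1 d h hq)).2 (hdU hq)
        · intro h2d
          exact h2t.2.1 d h2d
      · exact ⟨fun _ => h, fun _ => h2t.2.1 d h⟩
    have e2 : (D1 ∪ D2).filter (fun d => d ⊆ U) = D2 := by
      ext d
      simp only [mem_filter, Finset.mem_union]
      constructor
      · rintro ⟨hd, hdU⟩; exact (key d (Finset.mem_union.2 hd)).1 hdU
      · exact fun h => ⟨Or.inr h, h2t.2.1 d h⟩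
    have e1 : (D1 ∪ D2).filter (fun d => ¬ d ⊆ U) = D1 := by
      ext d
      simp only [mem_filter, Finset.mem_union]
      constructor
      · rintro ⟨hd, hdU⟩
        rcases hd with h | h
        · exact h
        · exact absurd (h2t.2.1 d h) hdU
      · intro h
        refine ⟨Or.inl h, fun hdU => ?_⟩
        obtain ⟨q, hq⟩ := domino_nonempty (h1t.1 d h)
        exact (mem_sdiff.1 (h1t.2.1 d h hq)).2 (hdU hq)
    exact Prod.ext e1 e2
  · intro D hD
    simp only
    have hdisj : Disjoint (D.filter (fun d => ¬ d ⊆ U)) (D.filter (fun d => d ⊆ U)) :=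
      (disjoint_filter_filter_not D D (fun d => d ⊆ U)).symm
    have : D = D.filter (fun d => ¬ d ⊆ U) ∪ D.filter (fun d => d ⊆ U) := by
      rw [Finset.union_comm, Finset.filter_union_filter_not_eq]
    conv_lhs => rw [this]
    rw [hcount_union hdisj, pow_add]
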